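/- Let (Ω, μ) be a measure space, let γ > 3, m > 2, M > 0 and δ > 0. Then there exists a constant C > 0, depending only on γ, m, M and δ, such that for all measurable nonnegative functions ρ, θ on Ω with ρ ∈ L^{2γ}(μ), θ ∈ L^{3m}(μ) and ∫_Ω ρ dμ = M, one has ‖ρθ‖²_{L²(μ)} ≤ δ‖θ‖^{m}_{L^{3m}(μ)} + C·‖ρ‖^{κ}_{L^{2γ}(μ)}, where κ = (2γ/(2γ−1))·((3m+2)/(3(m−2))). -/

import Mathlib

open MeasureTheory
open scoped ENNReal NNReal

/-- Inequality (estimrhotheta): for `γ > 3`, `m > 2`, `M > 0`, `δ > 0` there is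
`C > 0` depending only on these data such that for all measurable nonnegative
`ρ ∈ L^{2γ}`, `θ ∈ L^{3m}` with `∫ ρ = M`,
`‖ρθ‖₂² ≤ δ‖θ‖_{3m}^m + C‖ρ‖_{2γ}^κ`, where `κ = (2γ/(2γ−1))·((3m+2)/(3(m−2)))`. -/
theorem rho_theta_L2_bound
    {Ω : Type*} [MeasurableSpace Ω] (μ : Measure Ω)
    (γ m M δ : ℝ) (hγ : 3 < γ) (hm : 2 < m) (hM : 0 < M) (hδ : 0 < δ) :
    ∃ C : ℝ, 0 < C ∧ ∀ ρ θ : Ω → ℝ,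
      Measurable ρ → Measurable θ → (∀ x, 0 ≤ ρ x) → (∀ x, 0 ≤ θ x) →
      MemLp ρ (ENNReal.ofReal (2 * γ)) μ → MemLp θ (ENNReal.ofReal (3 * m)) μ →
      (∫ x, ρ x ∂μ) = M →
      (eLpNorm (fun x => ρ x * θ x) 2 μ).toReal ^ (2 : ℕ)
        ≤ δ * (eLpNorm θ (ENNReal.ofReal (3 * m)) μ).toReal ^ m
          + C * (eLpNorm ρ (ENNReal.ofReal (2 * γ)) μ).toReal
              ^ ((2 * γ / (2 * γ - 1)) * ((3 * m + 2) / (3 * (m - 2)))) := by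
  have hm2 : (0:ℝ) < m - 2 := by linarith
  have h3m2 : (0:ℝ) < 3*m - 2 := by linarith
  have h3m : (0:ℝ) < 3*m := by linarith
  have h2γ : (0:ℝ) < 2*γ := by linarith
  have h2γ1 : (0:ℝ) < 2*γ - 1 := by linarith
  set q : ℝ := 6*m/(3*m-2) with hq_def
  have hq0 : 0 < q := by positivity
  have hq1 : 1 < q := by rw [hq_def, lt_div_iff₀ h3m2]; linarith
  have hq3 : q < 3 := by rw [hq_def, div_lt_iff₀ h3m2]; linarith
  set b : ℝ := (q-1)/(2*γ-1) with hb_def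
  have hb0 : 0 < b := div_pos (by linarith) h2γ1
  have hb1 : b < 1 := by rw [hb_def, div_lt_one h2γ1]; linarith
  set a : ℝ := 1 - b with ha_def
  have ha0 : 0 < a := by simp [ha_def]; linarith
  have hab : a + b = 1 := by simp [ha_def]
  have key1 : a + 2*γ*b = q := by
    rw [ha_def, hb_def]; field_simp; ring
  -- Hölder exponent identity (reals)
  have hpqr_real : q⁻¹ + (3*m)⁻¹ = (2:ℝ)⁻¹ := by
    rw [hq_def]; field_simp; ring
  -- Young exponents
  set p₁ : ℝ := m/2 with hp₁_def
  set p₂ : ℝ := m/(m-2) with hp₂_def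
  have hp₁1 : 1 < p₁ := by rw [hp₁_def]; linarith
  have hconj : p₁.HolderConjugate p₂ := by
    rw [Real.holderConjugate_iff]
    constructor
    · exact hp₁1
    · rw [hp₁_def, hp₂_def]; field_simp; ring
  have hp₂0 : 0 < p₂ := hconj.symm.pos
  -- the interpolation exponent
  set t : ℝ := 2*γ*b/q with ht_def
  have ht0 : 0 < t := by positivity
  have hκ : 2*t*p₂ = (2 * γ / (2 * γ - 1)) * ((3 * m + 2) / (3 * (m - 2))) := by
    rw [ht_def, hb_def, hp₂_def, hq_def, div_sub_one h3m2.ne']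
    field_simp [h3m2.ne', (by linarith : m * 3 - 2 ≠ 0)]
    ring
  -- constants
  set ε : ℝ := (δ * p₁) ^ (1/p₁) with hε_def
  have hε0 : 0 < ε := by positivity
  set C₁ : ℝ := M ^ ((a/q) * 2) with hC₁_def
  have hC₁0 : 0 < C₁ := by positivity
  refine ⟨(C₁/ε) ^ p₂ / p₂, by positivity, ?_⟩
  intro ρ θ hρmeas hθmeas hρ0 hθ0 hρLp hθLp hint
  have hρsm : AEStronglyMeasurable ρ μ := hρmeas.aestronglyMeasurable
  have hθsm : AEStronglyMeasurable θ μ := hθmeas.aestronglyMeasurable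
  -- ρ is integrable
  have hρint : Integrable ρ μ := by
    by_contra h
    rw [integral_undef h] at hint
    exact absurd hint.symm hM.ne'
  set F : Ω → ℝ≥0∞ := fun x => (‖ρ x‖₊ : ℝ≥0∞) with hF_def
  have hFmeas : Measurable F := hρmeas.nnnorm.coe_nnreal_ennreal
  have hF : ∀ x, F x = ENNReal.ofReal (ρ x) := by
    intro x
    simp only [hF_def, ← enorm_eq_nnnorm, ← ofReal_norm, Real.norm_of_nonneg (hρ0 x)]
  have hFint : ∫⁻ x, F x ∂μ = ENNReal.ofReal M := by
    simp_rw [hF]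
    rw [← ofReal_integral_eq_lintegral_ofReal hρint (Filter.Eventually.of_forall hρ0), hint]
  set S : ℝ≥0∞ := eLpNorm ρ (ENNReal.ofReal (2*γ)) μ with hS_def
  set T : ℝ≥0∞ := eLpNorm θ (ENNReal.ofReal (3*m)) μ with hT_def
  have hSlt : S < ⊤ := hρLp.2
  have hTlt : T < ⊤ := hθLp.2
  have hS_eq : S = (∫⁻ x, F x ^ (2*γ) ∂μ) ^ (1/(2*γ)) := by
    rw [hS_def, eLpNorm_eq_lintegral_rpow_enorm_toReal (by simp [ENNReal.ofReal_eq_zero]; linarith)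
      ENNReal.ofReal_ne_top, ENNReal.toReal_ofReal h2γ.le]
    rfl
  have hB_eq : ∫⁻ x, F x ^ (2*γ) ∂μ = S ^ (2*γ) := by
    rw [hS_eq, ← ENNReal.rpow_mul, one_div, inv_mul_cancel₀ h2γ.ne', ENNReal.rpow_one]
  -- interpolation
  have hinterp : ∫⁻ x, F x ^ q ∂μ ≤ (ENNReal.ofReal M) ^ a * (S ^ (2*γ)) ^ b := by
    rw [← hB_eq, ← hFint]
    calc ∫⁻ x, F x ^ q ∂μ = ∫⁻ x, (F x) ^ a * (F x ^ (2*γ)) ^ b ∂μ := by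
          refine lintegral_congr fun x => ?_
          rw [← ENNReal.rpow_mul, ← ENNReal.rpow_add_of_nonneg _ _ ha0.le (by positivity), key1]
      _ ≤ (∫⁻ x, F x ∂μ) ^ a * (∫⁻ x, F x ^ (2*γ) ∂μ) ^ b :=
          ENNReal.lintegral_mul_norm_pow_le hFmeas.aemeasurable
            (hFmeas.pow_const (2*γ)).aemeasurable ha0.le hb0.le hab
  have hq_norm : eLpNorm ρ (ENNReal.ofReal q) μ ≤ (ENNReal.ofReal M) ^ (a/q) * S ^ t := by
    rw [eLpNorm_eq_lintegral_rpow_enorm_toReal (by simp [ENNReal.ofReal_eq_zero]; linarith)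
      ENNReal.ofReal_ne_top, ENNReal.toReal_ofReal hq0.le]
    calc (∫⁻ x, F x ^ q ∂μ) ^ (1/q)
        ≤ ((ENNReal.ofReal M) ^ a * (S ^ (2*γ)) ^ b) ^ (1/q) :=
          ENNReal.rpow_le_rpow hinterp (by positivity)
      _ = (ENNReal.ofReal M) ^ (a/q) * S ^ t := by
          rw [ENNReal.mul_rpow_of_nonneg _ _ (by positivity), ← ENNReal.rpow_mul,
            ← ENNReal.rpow_mul, ← ENNReal.rpow_mul, ht_def]
          congr 1 <;> congr 1 <;> field_simp <;> ring
  -- Hölder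
  have hpqr : 1/(2:ℝ≥0∞) = 1/ENNReal.ofReal q + 1/ENNReal.ofReal (3*m) := by
    rw [one_div, one_div, one_div, ← ENNReal.ofReal_inv_of_pos hq0,
      ← ENNReal.ofReal_inv_of_pos h3m, ← ENNReal.ofReal_add (by positivity) (by positivity),
      hpqr_real]
    simp [ENNReal.ofReal_inv_of_pos]
  have hHold : eLpNorm (fun x => ρ x * θ x) 2 μ
      ≤ eLpNorm ρ (ENNReal.ofReal q) μ * T := by
    have := eLpNorm_smul_le_mul_eLpNorm (𝕜 := ℝ) (p := ENNReal.ofReal q) (q := ENNReal.ofReal (3*m)) (r := 2)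
      (hpqr := ⟨by simpa only [one_div] using hpqr.symm⟩) hθsm hρsm
    exact this
  -- combine
  set K : ℝ≥0∞ := (ENNReal.ofReal M) ^ (a/q) * S ^ t * T with hK_def
  have hKlt : K < ⊤ := by
    rw [hK_def]
    refine ENNReal.mul_lt_top (ENNReal.mul_lt_top ?_ ?_) hTlt
    · exact ENNReal.rpow_lt_top_of_nonneg (by positivity) ENNReal.ofReal_ne_top
    · exact ENNReal.rpow_lt_top_of_nonneg ht0.le hSlt.ne
  have hmain : eLpNorm (fun x => ρ x * θ x) 2 μ ≤ K := by
    rw [hK_def]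
    exact hHold.trans (mul_le_mul_left hq_norm T)
  have htoReal : (eLpNorm (fun x => ρ x * θ x) 2 μ).toReal ≤ K.toReal :=
    ENNReal.toReal_mono hKlt.ne hmain
  have hK_toReal : K.toReal = M ^ (a/q) * S.toReal ^ t * T.toReal := by
    rw [hK_def, ENNReal.toReal_mul, ENNReal.toReal_mul, ← ENNReal.toReal_rpow,
      ← ENNReal.toReal_rpow, ENNReal.toReal_ofReal hM.le]
  set R : ℝ := S.toReal with hR_def
  set Θ : ℝ := T.toReal with hΘ_def
  have hR0 : 0 ≤ R := ENNReal.toReal_nonneg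
  have hΘ0 : 0 ≤ Θ := ENNReal.toReal_nonneg
  have hA0 : 0 ≤ (eLpNorm (fun x => ρ x * θ x) 2 μ).toReal := ENNReal.toReal_nonneg
  have hK0 : 0 ≤ K.toReal := ENNReal.toReal_nonneg
  have hsq : (eLpNorm (fun x => ρ x * θ x) 2 μ).toReal ^ (2:ℕ)
      ≤ (C₁ * R ^ (2*t)) * Θ ^ (2:ℕ) := by
    calc (eLpNorm (fun x => ρ x * θ x) 2 μ).toReal ^ (2:ℕ)
        ≤ K.toReal ^ (2:ℕ) := pow_le_pow_left₀ hA0 htoReal 2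
      _ = (C₁ * R ^ (2*t)) * Θ ^ (2:ℕ) := by
          rw [hK_toReal, mul_pow, mul_pow, hC₁_def]
          congr 1
          congr 1
          · rw [← Real.rpow_natCast (M ^ (a/q)) 2, ← Real.rpow_mul hM.le]
            norm_num
          · rw [← Real.rpow_natCast (R ^ t) 2, ← Real.rpow_mul hR0]
            norm_num [mul_comm]
  -- Young's inequality
  have hv0 : 0 ≤ C₁ * R ^ (2*t) := by positivity
  have hu0 : (0:ℝ) ≤ Θ ^ (2:ℕ) := by positivity
  have hyoung : (C₁ * R ^ (2*t)) * Θ ^ (2:ℕ)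
      ≤ ((C₁ * R ^ (2*t)) / ε) ^ p₂ / p₂ + (ε * Θ ^ (2:ℕ)) ^ p₁ / p₁ := by
    have h := Real.young_inequality_of_nonneg (a := (C₁ * R ^ (2*t)) / ε)
      (b := ε * Θ ^ (2:ℕ)) (by positivity) (by positivity) hconj.symm
    calc (C₁ * R ^ (2*t)) * Θ ^ (2:ℕ)
        = ((C₁ * R ^ (2*t)) / ε) * (ε * Θ ^ (2:ℕ)) := by
          field_simp
      _ ≤ _ := h
  have hterm1 : (ε * Θ ^ (2:ℕ)) ^ p₁ / p₁ = δ * Θ ^ m := by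
    rw [Real.mul_rpow hε0.le hu0, hε_def, ← Real.rpow_mul (by positivity),
      one_div, inv_mul_cancel₀ (by positivity : p₁ ≠ 0), Real.rpow_one]
    rw [← Real.rpow_natCast Θ 2, ← Real.rpow_mul hΘ0]
    have h2p : ((2:ℕ):ℝ) * p₁ = m := by rw [hp₁_def]; push_cast; field_simp
    rw [h2p]
    field_simp
  have hterm2 : ((C₁ * R ^ (2*t)) / ε) ^ p₂ / p₂
      = ((C₁/ε) ^ p₂ / p₂) * R ^ (2*t*p₂) := by
    have h1 : (C₁ * R ^ (2*t)) / ε = (C₁/ε) * R ^ (2*t) := by ring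
    rw [h1, Real.mul_rpow (by positivity) (by positivity), ← Real.rpow_mul hR0]
    ring
  calc (eLpNorm (fun x => ρ x * θ x) 2 μ).toReal ^ (2:ℕ)
      ≤ (C₁ * R ^ (2*t)) * Θ ^ (2:ℕ) := hsq
    _ ≤ ((C₁ * R ^ (2*t)) / ε) ^ p₂ / p₂ + (ε * Θ ^ (2:ℕ)) ^ p₁ / p₁ := hyoung
    _ = δ * Θ ^ m + ((C₁/ε) ^ p₂ / p₂)
          * R ^ ((2 * γ / (2 * γ - 1)) * ((3 * m + 2) / (3 * (m - 2)))) := by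
        rw [hterm1, hterm2, hκ]; ring
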